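/- Let $\hat\tau = \{(x,y) : x \ge 0, y \ge 0, x+y \le 1\}$ and $\hat\varphi_0(x,y) = 1 - x - y$. For $\alpha > 1$, $\int_{\hat\tau} \mathrm{sgn}\big({-(\alpha-1)} + (\alpha-1)x + \alpha y\big)\,\hat\varphi_0(x,y)\,dx\,dy = \frac{1}{6} - \frac{1}{3}\cdot\frac{(\alpha-1)(\alpha+1)}{\alpha^2}$. -/

import Mathlib

open MeasureTheory

private lemma measurable_realSign : Measurable Real.sign := by
  unfold Real.sign
  exact Measurable.ite (measurableSet_lt measurable_id measurable_const) measurable_const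
    (Measurable.ite (measurableSet_lt measurable_const measurable_id) measurable_const
      measurable_const)

private lemma abs_realSign (r : ℝ) : |Real.sign r| ≤ 1 := by
  rcases Real.sign_apply_eq r with h | h | h <;> rw [h] <;> norm_num

theorem stmt16 (α : ℝ) (hα : 1 < α) :
    (∫ p in {p : ℝ × ℝ | 0 ≤ p.1 ∧ 0 ≤ p.2 ∧ p.1 + p.2 ≤ 1},
        Real.sign (-(α - 1) + (α - 1) * p.1 + α * p.2) * (1 - p.1 - p.2)) =
      1 / 6 - 1 / 3 * ((α - 1) * (α + 1) / α ^ 2) := by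
  have hα0 : (0:ℝ) < α := lt_trans one_pos hα
  set c : ℝ := (α - 1) / α with hc
  have hac : α * c = α - 1 := by rw [hc, mul_div_assoc', mul_div_cancel_left₀ _ hα0.ne']
  have hc0 : 0 ≤ c := div_nonneg (by linarith) hα0.le
  have hc1 : c ≤ 1 := by rw [hc, div_le_one hα0]; linarith
  set f : ℝ × ℝ → ℝ := fun p => Real.sign (-(α - 1) + (α - 1) * p.1 + α * p.2) * (1 - p.1 - p.2)
    with hf
  set S : Set (ℝ × ℝ) := {p : ℝ × ℝ | 0 ≤ p.1 ∧ 0 ≤ p.2 ∧ p.1 + p.2 ≤ 1} with hS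
  have hSm : MeasurableSet S := by
    apply MeasurableSet.inter (measurableSet_le measurable_const measurable_fst)
    exact MeasurableSet.inter (measurableSet_le measurable_const measurable_snd)
      (measurableSet_le (measurable_fst.add measurable_snd) measurable_const)
  have hfm : Measurable f := by
    apply Measurable.mul _ ((measurable_const.sub measurable_fst).sub measurable_snd)
    exact measurable_realSign.comp
      ((measurable_const.add (measurable_fst.const_mul _)).add (measurable_snd.const_mul _))
  -- integrability of f on S
  have hSfin : volume S ≠ ⊤ := by
    have hsub : S ⊆ Set.Icc ((0:ℝ),(0:ℝ)) (1,1) := by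
      rintro ⟨x, y⟩ ⟨h1, h2, h3⟩
      simp only at h1 h2 h3
      exact ⟨⟨h1, h2⟩, ⟨show x ≤ 1 by linarith, show y ≤ 1 by linarith⟩⟩
    exact ne_of_lt (lt_of_le_of_lt (measure_mono hsub) (IsCompact.measure_lt_top isCompact_Icc))
  have hIntS : IntegrableOn f S := by
    apply Measure.integrableOn_of_bounded (M := 1) hSfin hfm.aestronglyMeasurable
    filter_upwards [ae_restrict_mem hSm] with p hp
    rcases hp with ⟨h1, h2, h3⟩
    have hb := abs_realSign (-(α - 1) + (α - 1) * p.1 + α * p.2)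
    rw [hf]
    simp only [Real.norm_eq_abs, abs_mul]
    have h4 : |1 - p.1 - p.2| ≤ 1 := by rw [abs_le]; constructor <;> linarith
    calc |Real.sign (-(α - 1) + (α - 1) * p.1 + α * p.2)| * |1 - p.1 - p.2|
        ≤ 1 * 1 := mul_le_mul hb h4 (abs_nonneg _) zero_le_one
      _ = 1 := by norm_num
  -- 1D integrability on subintervals
  have hInt1 : ∀ x : ℝ, x ∈ Set.Icc (0:ℝ) 1 → ∀ u v : ℝ, Set.Ioc u v ⊆ Set.Icc 0 (1 - x) →
      IntegrableOn (fun y => f (x, y)) (Set.Ioc u v) := by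
    intro x hx u v huv
    have hm1 : Measurable fun y : ℝ => f (x, y) := hfm.comp (measurable_prodMk_left)
    apply Measure.integrableOn_of_bounded (M := 1) (by simp) hm1.aestronglyMeasurable
    filter_upwards [ae_restrict_mem measurableSet_Ioc] with y hy
    have hy' := huv hy
    have hb := abs_realSign (-(α - 1) + (α - 1) * x + α * y)
    rw [hf]
    simp only [Real.norm_eq_abs, abs_mul]
    have h4 : |1 - x - y| ≤ 1 := by
      rw [abs_le]
      constructor <;> [linarith [hy'.2, hx.2]; linarith [hy'.1, hx.1]]
    calc |Real.sign (-(α - 1) + (α - 1) * x + α * y)| * |1 - x - y|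
        ≤ 1 * 1 := mul_le_mul hb h4 (abs_nonneg _) zero_le_one
      _ = 1 := by norm_num
  -- inner integral computation
  have key : ∀ x ∈ Set.Icc (0:ℝ) 1,
      (∫ y in Set.Icc 0 (1 - x), f (x, y)) = (1 - x)^2 * (1/2 - 2*c + c^2) := by
    intro x hx
    have hb0 : (0:ℝ) ≤ 1 - x := by linarith [hx.2]
    have hcb0 : 0 ≤ c * (1 - x) := mul_nonneg hc0 hb0
    have hcb : c * (1 - x) ≤ 1 - x := by nlinarith
    rw [integral_Icc_eq_integral_Ioc, ← Set.Ioc_union_Ioc_eq_Ioc hcb0 hcb,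
      setIntegral_union (Set.Ioc_disjoint_Ioc_of_le le_rfl) measurableSet_Ioc
        (hInt1 x hx 0 (c*(1-x)) (fun y hy => ⟨hy.1.le, le_trans hy.2 hcb⟩))
        (hInt1 x hx (c*(1-x)) (1-x) (fun y hy => ⟨le_trans hcb0 hy.1.le, hy.2⟩))]
    have e1 : (∫ y in Set.Ioc 0 (c*(1-x)), f (x, y))
        = ∫ y in Set.Ioc 0 (c*(1-x)), (y - (1 - x)) := by
      apply setIntegral_congr_ae measurableSet_Ioc
      have hne : ∀ᵐ y : ℝ, y ∈ ({c*(1-x)} : Set ℝ)ᶜ :=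
        compl_mem_ae_iff.mpr (measure_singleton _)
      filter_upwards [hne] with y hy hyI
      have hylt : y < c * (1 - x) := lt_of_le_of_ne hyI.2 (by simpa using hy)
      have h2 : α * y < (α - 1) * (1 - x) := by
        calc α * y < α * (c * (1 - x)) := mul_lt_mul_of_pos_left hylt hα0
          _ = (α - 1) * (1 - x) := by rw [← mul_assoc, hac]
      have hneg : -(α - 1) + (α - 1) * x + α * y < 0 := by linarith
      rw [hf]; simp only; rw [Real.sign_of_neg hneg]; ring
    have e2 : (∫ y in Set.Ioc (c*(1-x)) (1-x), f (x, y))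
        = ∫ y in Set.Ioc (c*(1-x)) (1-x), ((1 - x) - y) := by
      apply setIntegral_congr_fun measurableSet_Ioc
      intro y hyI
      have hygt : c * (1 - x) < y := hyI.1
      have h2 : (α - 1) * (1 - x) < α * y := by
        calc (α - 1) * (1 - x) = α * (c * (1 - x)) := by rw [← mul_assoc, hac]
          _ < α * y := mul_lt_mul_of_pos_left hygt hα0
      have hpos : 0 < -(α - 1) + (α - 1) * x + α * y := by linarith
      rw [hf]; simp only; rw [Real.sign_of_pos hpos]; ring
    rw [e1, e2, ← intervalIntegral.integral_of_le hcb0, ← intervalIntegral.integral_of_le hcb]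
    rw [intervalIntegral.integral_sub intervalIntegral.intervalIntegrable_id
        intervalIntegrable_const,
      intervalIntegral.integral_sub intervalIntegrable_const
        intervalIntegral.intervalIntegrable_id,
      integral_id, integral_id,
      intervalIntegral.integral_const, intervalIntegral.integral_const]
    simp only [smul_eq_mul]
    ring
  -- Fubini
  have hIndInt : Integrable (S.indicator f) (volume.prod volume) := by
    rw [← Measure.volume_eq_prod]
    exact (integrable_indicator_iff hSm).2 hIntS
  rw [← integral_indicator hSm, Measure.volume_eq_prod, integral_prod _ hIndInt]
  have inner_eq : ∀ x : ℝ, (∫ y, S.indicator f (x, y))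
      = Set.indicator (Set.Icc 0 1) (fun x => ∫ y in Set.Icc 0 (1 - x), f (x, y)) x := by
    intro x
    by_cases hx : x ∈ Set.Icc (0:ℝ) 1
    · rw [Set.indicator_of_mem hx]
      have hpt : ∀ y, S.indicator f (x, y)
          = (Set.Icc 0 (1 - x)).indicator (fun y => f (x, y)) y := by
        intro y
        by_cases hy : y ∈ Set.Icc (0:ℝ) (1 - x)
        · rw [Set.indicator_of_mem hy, Set.indicator_of_mem]
          exact ⟨hx.1, hy.1, by linarith [hy.2]⟩
        · rw [Set.indicator_of_notMem hy, Set.indicator_of_notMem]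
          intro hmem
          exact hy ⟨hmem.2.1, by linarith [hmem.2.2]⟩
      simp only [hpt]
      rw [integral_indicator measurableSet_Icc]
    · rw [Set.indicator_of_notMem hx]
      have hpt : ∀ y, S.indicator f (x, y) = 0 := by
        intro y
        apply Set.indicator_of_notMem
        intro hmem
        rcases hmem with ⟨h1, h2, h3⟩
        simp only [Set.mem_Icc, not_and, not_le] at hx
        have := hx h1
        simp only at h1 h2 h3
        linarith
      simp only [hpt, integral_zero]
  simp only [inner_eq]
  rw [integral_indicator measurableSet_Icc,
    setIntegral_congr_fun measurableSet_Icc key,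
    integral_Icc_eq_integral_Ioc, ← intervalIntegral.integral_of_le zero_le_one,
    intervalIntegral.integral_mul_const]
  have hsq : (∫ x in (0:ℝ)..1, (1 - x)^2) = 1/3 := by
    rw [show (fun x : ℝ => (1 - x)^2) = fun x : ℝ => (fun u : ℝ => u^2) (1 - x) from rfl,
      intervalIntegral.integral_comp_sub_left (fun u : ℝ => u^2) 1]
    norm_num [integral_pow]
  rw [hsq]
  rw [hc]
  field_simp
  ring
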